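/- Let H be an atomic cancellative monoid with finite nonempty set of distances Δ(H) and d = min Δ(H). Suppose that either ρ_k(H) = ∞ for some k ∈ ℕ, or there is M ∈ ℕ with ρ_k(H) − ρ_{k−1}(H) ≤ M for all k ≥ 2. Then lim_{k→∞} |U_k(H)|/k = (1/d)·(ρ(H) − 1/ρ(H)), where both sides are infinite if ρ_k(H) = ∞ for some k. -/

import Mathlib

open scoped Classical ENNReal

/-- The set of lengths of `a`: all `k` such that `a` is a product of `k` irreducibles,
with the convention `L(a) = {0}` for units. -/
noncomputable def lengths {M : Type*} [Monoid M] (a : M) : Set ℕ :=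
  if IsUnit a then {0}
  else {k | ∃ l : List M, l.length = k ∧ (∀ x ∈ l, Irreducible x) ∧ l.prod = a}

/-- A monoid is atomic if every nonunit is a finite product of irreducibles (atoms). -/
def Atomic (M : Type*) [Monoid M] : Prop :=
  ∀ a : M, ¬IsUnit a → ∃ l : List M, (∀ x ∈ l, Irreducible x) ∧ l.prod = a

/-- The set of distances of a set `L ⊆ ℕ`. -/
def distances (L : Set ℕ) : Set ℕ :=
  {d | 0 < d ∧ ∃ k ∈ L, k + d ∈ L ∧ ∀ m ∈ L, k ≤ m → m ≤ k + d → m = k ∨ m = k + d}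

/-- The set of distances `Δ(H)` of a monoid. -/
def DeltaH (M : Type*) [Monoid M] : Set ℕ :=
  ⋃ a : M, distances (lengths a)

/-- The union `U_k(H)` of all sets of lengths containing `k`. -/
def lengthUnion (M : Type*) [Monoid M] (k : ℕ) : Set ℕ :=
  {ℓ | ∃ l1 l2 : List M, l1.length = k ∧ l2.length = ℓ ∧
      (∀ x ∈ l1, Irreducible x) ∧ (∀ x ∈ l2, Irreducible x) ∧ l1.prod = l2.prod}

/-- The `k`-th elasticity `ρ_k(H) = sup U_k(H)`, valued in `ℝ≥0∞`. -/
noncomputable def rhoK (M : Type*) [Monoid M] (k : ℕ) : ℝ≥0∞ :=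
  ⨆ ℓ ∈ lengthUnion M k, (ℓ : ℝ≥0∞)

/-- `λ_k(H) = min U_k(H)`. -/
noncomputable def lamK (M : Type*) [Monoid M] (k : ℕ) : ℕ :=
  sInf (lengthUnion M k)

/-- The elasticity `ρ(L) = sup L / min L` of a set of lengths, with `ρ({0}) = 1`. -/
noncomputable def setElasticity (L : Set ℕ) : ℝ≥0∞ :=
  if L = {0} then 1 else (⨆ n ∈ L, (n : ℝ≥0∞)) / ((sInf L : ℕ) : ℝ≥0∞)

/-- The elasticity `ρ(H) = sup { ρ(L(a)) : a ∈ H }`. -/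
noncomputable def elasticity (M : Type*) [Monoid M] : ℝ≥0∞ :=
  ⨆ a : M, setElasticity (lengths a)

/-- The principal left ideal `Ha`. -/
def leftIdeal {M : Type*} [Monoid M] (a : M) : Set M := Set.range (· * a)

/-- The principal right ideal `aH`. -/
def rightIdeal {M : Type*} [Monoid M] (a : M) : Set M := Set.range (a * ·)

/-- `A` is a generating set of the monoid `M`. -/
def Generates {M : Type*} [Monoid M] (A : Set M) : Prop :=
  ∀ a : M, ∃ l : List M, (∀ x ∈ l, x ∈ A) ∧ l.prod = a

section AuxCombinatorics

variable {M : Type*} [CancelMonoid M]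

/-- `a` is a product of `n` irreducibles. -/
def HasLen (a : M) (n : ℕ) : Prop :=
  ∃ l : List M, l.length = n ∧ (∀ x ∈ l, Irreducible x) ∧ l.prod = a

theorem isUnit_left_of_isUnit_mul {a b : M} (h : IsUnit (a * b)) : IsUnit a := by
  obtain ⟨u, hu⟩ := h
  have h1 : a * (b * ↑u⁻¹) = 1 := by
    rw [← mul_assoc, ← hu]; exact u.mul_inv
  have h2 : (b * ↑u⁻¹) * a = 1 := by
    have : a * ((b * ↑u⁻¹) * a) = a * 1 := by
      rw [← mul_assoc, h1, one_mul, mul_one]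
    exact mul_left_cancel this
  exact ⟨⟨a, b * ↑u⁻¹, h1, h2⟩, rfl⟩

theorem HasLen.not_isUnit {a : M} {n : ℕ} (h : HasLen a n) (hn : 1 ≤ n) : ¬IsUnit a := by
  obtain ⟨l, hl, hirr, hprod⟩ := h
  cases l with
  | nil => simp at hl; omega
  | cons x t =>
    intro hu
    rw [← hprod, List.prod_cons] at hu
    exact (hirr x (by simp)).not_isUnit (isUnit_left_of_isUnit_mul hu)

theorem HasLen.isUnit_of_zero {a : M} (h : HasLen a 0) : IsUnit a := by
  obtain ⟨l, hl, -, hprod⟩ := h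
  rw [List.length_eq_zero_iff] at hl
  subst hl
  simp only [List.prod_nil] at hprod
  exact hprod ▸ isUnit_one

theorem HasLen.mul {a b : M} {n m : ℕ} (ha : HasLen a n) (hb : HasLen b m) :
    HasLen (a * b) (n + m) := by
  obtain ⟨l1, hl1, hi1, hp1⟩ := ha
  obtain ⟨l2, hl2, hi2, hp2⟩ := hb
  exact ⟨l1 ++ l2, by simp [hl1, hl2], by
    intro x hx; rcases List.mem_append.1 hx with h | h
    exacts [hi1 x h, hi2 x h], by simp [hp1, hp2]⟩

theorem HasLen.pow {a : M} {n : ℕ} (ha : HasLen a n) (s : ℕ) : HasLen (a ^ s) (s * n) := by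
  induction s with
  | zero => exact ⟨[], by simp, by simp, by simp⟩
  | succ s ih =>
    have := ih.mul ha
    rwa [← pow_succ, show s * n + n = (s+1) * n by ring] at this

theorem HasLen.pow_mix {a : M} {n m : ℕ} (ha : HasLen a n) (ha' : HasLen a m)
    {i s : ℕ} (his : i ≤ s) : HasLen (a ^ s) ((s - i) * n + i * m) := by
  have h := (ha.pow (s - i)).mul (ha'.pow i)
  rwa [← pow_add, Nat.sub_add_cancel his] at h

theorem lengths_eq_of_not_isUnit {a : M} (h : ¬IsUnit a) :
    lengths a = {n | HasLen a n} := by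
  simp only [lengths, if_neg h]; rfl

theorem zero_not_mem_lengths {a : M} (h : ¬IsUnit a) : 0 ∉ lengths a := by
  rw [lengths_eq_of_not_isUnit h]
  exact fun h0 => h (HasLen.isUnit_of_zero h0)

theorem mem_lengthUnion {k ℓ : ℕ} :
    ℓ ∈ lengthUnion M k ↔ ∃ a : M, HasLen a k ∧ HasLen a ℓ := by
  constructor
  · rintro ⟨l1, l2, h1, h2, hi1, hi2, hp⟩
    exact ⟨l1.prod, ⟨l1, h1, hi1, rfl⟩, ⟨l2, h2, hi2, hp.symm⟩⟩
  · rintro ⟨a, ⟨l1, h1, hi1, hp1⟩, ⟨l2, h2, hi2, hp2⟩⟩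
    exact ⟨l1, l2, h1, h2, hi1, hi2, by rw [hp1, hp2]⟩

/-- Basic data extracted from the nonemptiness of `Δ(H)`. -/
theorem delta_witness (hne : (DeltaH M).Nonempty) :
    ∃ (aw : M) (x : ℕ), ¬IsUnit aw ∧ 1 ≤ x ∧ 1 ≤ sInf (DeltaH M) ∧
      HasLen aw x ∧ HasLen aw (x + sInf (DeltaH M)) := by
  have hd : sInf (DeltaH M) ∈ DeltaH M := Nat.sInf_mem hne
  rw [DeltaH, Set.mem_iUnion] at hd
  obtain ⟨aw, hd0, x, hx, hxd, -⟩ := hd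
  have haw : ¬IsUnit aw := by
    intro hu
    rw [lengths, if_pos hu] at hx hxd
    simp only [Set.mem_singleton_iff] at hx hxd
    omega
  rw [lengths_eq_of_not_isUnit haw] at hx hxd
  have hx1 : 1 ≤ x := by
    rcases Nat.eq_zero_or_pos x with h0 | h; · exact absurd (h0 ▸ hx).isUnit_of_zero haw
    exact h
  exact ⟨aw, x, haw, hx1, hd0, hx, hxd⟩

/-- Every element of `Δ(H)` is divisible by `min Δ(H)`. -/
theorem sInf_delta_dvd (hne : (DeltaH M).Nonempty) : ∀ g ∈ DeltaH M, sInf (DeltaH M) ∣ g := by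
  set d := sInf (DeltaH M) with hd_def
  obtain ⟨aw, x, haw, hx1, hd1, hx, hxd⟩ := delta_witness hne
  intro g hg
  rw [DeltaH, Set.mem_iUnion] at hg
  obtain ⟨c, hg0, y, hy, hyg, -⟩ := hg
  have hc : ¬IsUnit c := by
    intro hu
    rw [lengths, if_pos hu] at hy hyg
    simp only [Set.mem_singleton_iff] at hy hyg
    omega
  rw [lengths_eq_of_not_isUnit hc] at hy hyg
  by_contra hnd
  set r := g % d with hr_def
  set q := g / d with hq_def
  have hdm : q * d + r = g := by rw [mul_comm]; exact Nat.div_add_mod g d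
  have hr0 : 0 < r := Nat.pos_of_ne_zero fun h0 => hnd (Nat.dvd_of_mod_eq_zero h0)
  have hrd : r < d := Nat.mod_lt _ (by omega)
  set e := c * aw ^ q with he_def
  have he : ¬IsUnit e := fun hu => hc (isUnit_left_of_isUnit_mul hu)
  have hA : HasLen e (y + q * (x + d)) := hy.mul (hxd.pow q)
  have hB : HasLen e ((y + g) + q * x) := hyg.mul (hx.pow q)
  set A := y + q * (x + d) with hA_def
  set B := y + g + q * x with hB_def
  have hAB : A + r = B := by
    simp only [hA_def, hB_def, Nat.mul_add]
    omega
  have hABlt : A < B := by omega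
  set S := {m | m ∈ lengths e ∧ A < m} with hS_def
  have hBS : B ∈ S := ⟨by rw [lengths_eq_of_not_isUnit he]; exact hB, hABlt⟩
  set s := sInf S with hs_def
  obtain ⟨hsL, hsA⟩ := Nat.sInf_mem (⟨B, hBS⟩ : S.Nonempty)
  have hsB : s ≤ B := Nat.sInf_le hBS
  have hgap : s - A ∈ distances (lengths e) := by
    refine ⟨by omega, A, ?_, ?_, ?_⟩
    · rw [lengths_eq_of_not_isUnit he]; exact hA
    · rwa [Nat.add_sub_cancel' hsA.le]
    · intro m hm h1 h2
      rcases eq_or_lt_of_le h1 with h | h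
      · exact Or.inl h.symm
      · right
        have : s ≤ m := Nat.sInf_le ⟨hm, h⟩
        omega
  have hmem : s - A ∈ DeltaH M := Set.mem_iUnion.2 ⟨e, hgap⟩
  have := Nat.sInf_le hmem
  omega

/-- Any two lengths of the same element differ by a multiple of `min Δ(H)`. -/
theorem lengths_sub_dvd (hne : (DeltaH M).Nonempty) {c : M} (hc : ¬IsUnit c) :
    ∀ n p q : ℕ, p ∈ lengths c → q ∈ lengths c → q - p = n → sInf (DeltaH M) ∣ n := by
  intro n
  induction n using Nat.strong_induction_on with
  | _ n ih =>
    intro p q hp hq hpq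
    rcases Nat.eq_zero_or_pos n with h0 | hpos
    · simp [h0]
    have hplt : p < q := by omega
    by_cases hbet : ∃ m ∈ lengths c, p < m ∧ m < q
    · obtain ⟨m, hm, h1, h2⟩ := hbet
      have d1 := ih (m - p) (by omega) p m hp hm rfl
      have d2 := ih (q - m) (by omega) m q hm hq rfl
      have : n = (m - p) + (q - m) := by omega
      rw [this]; exact dvd_add d1 d2
    · push_neg at hbet
      have hdist : n ∈ distances (lengths c) := by
        refine ⟨hpos, p, hp, by rwa [show p + n = q by omega], ?_⟩
        intro m hm h1 h2
        rcases eq_or_lt_of_le h1 with h | h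
        · exact Or.inl h.symm
        · have := hbet m hm h
          omega
      exact sInf_delta_dvd hne n (Set.mem_iUnion.2 ⟨c, hdist⟩)

/-- Any two elements of `U_k` (for `k ≥ 1`) differ by a multiple of `min Δ(H)`. -/
theorem lengthUnion_sub_dvd (hne : (DeltaH M).Nonempty) {k ℓ ℓ' : ℕ} (hk : 1 ≤ k)
    (h1 : ℓ ∈ lengthUnion M k) (h2 : ℓ' ∈ lengthUnion M k) (hle : ℓ ≤ ℓ') :
    sInf (DeltaH M) ∣ ℓ' - ℓ := by
  obtain ⟨a, hak, hal⟩ := mem_lengthUnion.1 h1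
  obtain ⟨b, hbk, hbl⟩ := mem_lengthUnion.1 h2
  have ha : ¬IsUnit a := hak.not_isUnit hk
  have hc : ¬IsUnit (a * b) := fun hu => ha (isUnit_left_of_isUnit_mul hu)
  have hp : ℓ + k ∈ lengths (a * b) := by
    rw [lengths_eq_of_not_isUnit hc]; exact hal.mul hbk
  have hq : k + ℓ' ∈ lengths (a * b) := by
    rw [lengths_eq_of_not_isUnit hc]; exact hak.mul hbl
  have := lengths_sub_dvd hne hc ((k + ℓ') - (ℓ + k)) (ℓ + k) (k + ℓ') hp hq rfl
  rwa [show (k + ℓ') - (ℓ + k) = ℓ' - ℓ by omega] at this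

theorem exists_irreducible (hne : (DeltaH M).Nonempty) : ∃ u : M, Irreducible u := by
  obtain ⟨aw, x, -, hx1, -, ⟨l, hl, hirr, -⟩, -⟩ := delta_witness hne
  cases l with
  | nil => simp at hl; omega
  | cons u t => exact ⟨u, hirr u (by simp)⟩

theorem self_mem_lengthUnion (hne : (DeltaH M).Nonempty) (k : ℕ) : k ∈ lengthUnion M k := by
  obtain ⟨u, hu⟩ := exists_irreducible hne
  refine mem_lengthUnion.2 ⟨(List.replicate k u).prod, ?_, ?_⟩ <;>
    exact ⟨List.replicate k u, by simp, by intro x hx; rw [List.eq_of_mem_replicate hx]; exact hu, rfl⟩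

theorem lengthUnion_encard_mono (hne : (DeltaH M).Nonempty) :
    Monotone (fun k => (lengthUnion M k).encard) := by
  apply monotone_nat_of_le_succ
  intro k
  obtain ⟨u, hu⟩ := exists_irreducible hne
  have hsub : (fun ℓ => ℓ + 1) '' lengthUnion M k ⊆ lengthUnion M (k + 1) := by
    rintro _ ⟨ℓ, hℓ, rfl⟩
    obtain ⟨a, hak, hal⟩ := mem_lengthUnion.1 hℓ
    have hu1 : HasLen u 1 := ⟨[u], by simp, by simpa using hu, by simp⟩
    exact mem_lengthUnion.2 ⟨a * u, hak.mul hu1, hal.mul hu1⟩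
  calc (lengthUnion M k).encard
      = ((fun ℓ => ℓ + 1) '' lengthUnion M k).encard :=
        (((add_left_injective 1).injOn).encard_image).symm
    _ ≤ (lengthUnion M (k + 1)).encard := Set.encard_mono hsub

end AuxCombinatorics


section AuxAnalytic

open Filter

variable {M : Type*} [CancelMonoid M]

theorem one_le_elasticity : (1 : ℝ≥0∞) ≤ elasticity M := by
  have h1 : setElasticity (lengths (1 : M)) = 1 := by
    rw [lengths, if_pos isUnit_one, setElasticity, if_pos rfl]
  calc (1 : ℝ≥0∞) = setElasticity (lengths (1 : M)) := h1.symm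
    _ ≤ elasticity M := le_iSup (fun a : M => setElasticity (lengths a)) 1

theorem setElasticity_nonunit {a : M} (h : ¬IsUnit a) :
    setElasticity (lengths a) = (⨆ n ∈ lengths a, (n : ℝ≥0∞)) / ((sInf (lengths a) : ℕ) : ℝ≥0∞) := by
  rw [setElasticity, if_neg]
  intro h0
  exact zero_not_mem_lengths h (h0 ▸ Set.mem_singleton 0)

theorem exists_min_bound {k ℓ : ℕ} (hk : 1 ≤ k) (hℓ : ℓ ∈ lengthUnion M k) :
    ∃ μ : ℕ, 1 ≤ μ ∧ μ ≤ k ∧ μ ≤ ℓ ∧ (ℓ : ℝ≥0∞) ≤ μ * elasticity M ∧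
      (k : ℝ≥0∞) ≤ μ * elasticity M := by
  obtain ⟨a, hak, hal⟩ := mem_lengthUnion.1 hℓ
  have ha : ¬IsUnit a := hak.not_isUnit hk
  have hkL : k ∈ lengths a := by rw [lengths_eq_of_not_isUnit ha]; exact hak
  have hlL : ℓ ∈ lengths a := by rw [lengths_eq_of_not_isUnit ha]; exact hal
  have hμmem : sInf (lengths a) ∈ lengths a := Nat.sInf_mem ⟨k, hkL⟩
  have hμ1 : 1 ≤ sInf (lengths a) := by
    rcases Nat.eq_zero_or_pos (sInf (lengths a)) with h0 | h
    · exact absurd (h0 ▸ hμmem) (zero_not_mem_lengths ha)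
    · exact h
  have key : ∀ n ∈ lengths a, (n : ℝ≥0∞) ≤ ((sInf (lengths a) : ℕ) : ℝ≥0∞) * elasticity M := by
    intro n hn
    have h1 : (n : ℝ≥0∞) ≤ ((sInf (lengths a) : ℕ) : ℝ≥0∞) * setElasticity (lengths a) := by
      rw [setElasticity_nonunit ha, ENNReal.mul_div_cancel
        (by exact_mod_cast Nat.one_le_iff_ne_zero.1 hμ1) (ENNReal.natCast_ne_top _)]
      exact le_iSup₂ (f := fun n (_ : n ∈ lengths a) => (n : ℝ≥0∞)) n hn
    exact h1.trans (mul_le_mul_right (le_iSup (fun a : M => setElasticity (lengths a)) a) _)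
  exact ⟨sInf (lengths a), hμ1, Nat.sInf_le hkL, Nat.sInf_le hlL, key ℓ hlL, key k hkL⟩

theorem encard_upper (hne : (DeltaH M).Nonempty) {k : ℕ} (hk : 1 ≤ k) :
    ((lengthUnion M k).encard : ℝ≥0∞) ≤
      k * ((1 / ((sInf (DeltaH M) : ℕ) : ℝ≥0∞)) * (elasticity M - 1 / elasticity M)) + 1 := by
  obtain ⟨aw, x, haw, hx1, hd1, -, -⟩ := delta_witness hne
  set d := sInf (DeltaH M) with hd_def
  set ρ := elasticity M with hρ_def
  have hρ1 : (1 : ℝ≥0∞) ≤ ρ := one_le_elasticity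
  have hρ0 : ρ ≠ 0 := (zero_lt_one.trans_le hρ1).ne'
  have hd0' : (d : ℝ≥0∞) ≠ 0 := Nat.cast_ne_zero.2 (by omega)
  have hdt' : (d : ℝ≥0∞) ≠ ⊤ := ENNReal.natCast_ne_top d
  by_cases hinf : (lengthUnion M k).Infinite
  · have hρt : ρ = ⊤ := by
      by_contra hρt
      obtain ⟨n, hn⟩ := ENNReal.exists_nat_gt (ENNReal.mul_ne_top (ENNReal.natCast_ne_top k) hρt)
      have hex : ∃ ℓ ∈ lengthUnion M k, n < ℓ := by
        by_contra hcon
        push_neg at hcon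
        exact hinf (Set.Finite.subset (Set.finite_Iic n) hcon)
      obtain ⟨ℓ, hℓ, hnℓ⟩ := hex
      obtain ⟨μ, hμ1, hμk, hμℓ, hb1, hb2⟩ := exists_min_bound hk hℓ
      have h1 : (ℓ : ℝ≥0∞) ≤ (k : ℝ≥0∞) * ρ :=
        hb1.trans (mul_le_mul_left (by exact_mod_cast hμk) ρ)
      have h2 : ((n : ℕ) : ℝ≥0∞) < (ℓ : ℝ≥0∞) := by exact_mod_cast hnℓ
      exact lt_irrefl _ (lt_trans (h2.trans_le h1) hn)
    have hT : (1 / (d : ℝ≥0∞)) * (ρ - 1 / ρ) = ⊤ := by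
      rw [hρt, one_div, one_div, ENNReal.inv_top, tsub_zero,
        ENNReal.mul_top (ENNReal.inv_ne_zero.2 hdt')]
    rw [hT, ENNReal.mul_top (by exact_mod_cast Nat.one_le_iff_ne_zero.1 hk)]
    simp
  · have hfin := Set.not_infinite.1 hinf
    have hkmem := self_mem_lengthUnion hne k
    have hUne : (lengthUnion M k).Nonempty := ⟨k, hkmem⟩
    have hlamem : sInf (lengthUnion M k) ∈ lengthUnion M k := Nat.sInf_mem hUne
    set lam := sInf (lengthUnion M k) with hlam_def
    have hBdd : BddAbove (lengthUnion M k) := hfin.bddAbove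
    set B := sSup (lengthUnion M k) with hB_def
    have hBmem : B ∈ lengthUnion M k := Nat.sSup_mem hUne hBdd
    have hub : ∀ ℓ ∈ lengthUnion M k, ℓ ≤ B := fun ℓ h => le_csSup hBdd h
    have hinj : Set.InjOn (fun ℓ => (ℓ - lam) / d) (lengthUnion M k) := by
      intro ℓ1 h1 ℓ2 h2 hEq
      simp only at hEq
      have d1 := lengthUnion_sub_dvd hne hk hlamem h1 (Nat.sInf_le h1)
      have d2 := lengthUnion_sub_dvd hne hk hlamem h2 (Nat.sInf_le h2)
      have e1 : d * ((ℓ1 - lam) / d) = ℓ1 - lam := Nat.mul_div_cancel' d1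
      have e2 : d * ((ℓ2 - lam) / d) = ℓ2 - lam := Nat.mul_div_cancel' d2
      have l1 := Nat.sInf_le h1
      have l2 := Nat.sInf_le h2
      rw [hEq] at e1
      omega
    have hsub : (fun ℓ => (ℓ - lam) / d) '' lengthUnion M k ⊆ Set.Iic ((B - lam) / d) := by
      rintro _ ⟨ℓ, hℓ, rfl⟩
      exact Nat.div_le_div_right (Nat.sub_le_sub_right (hub ℓ hℓ) lam)
    have hcard : (lengthUnion M k).encard ≤ (((B - lam) / d + 1 : ℕ) : ℕ∞) := by
      calc (lengthUnion M k).encard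
          = ((fun ℓ => (ℓ - lam) / d) '' lengthUnion M k).encard := hinj.encard_image.symm
        _ ≤ (Set.Iic ((B - lam) / d)).encard := Set.encard_mono hsub
        _ = (((B - lam) / d + 1 : ℕ) : ℕ∞) := by
            rw [← Finset.coe_Iic, Set.encard_coe_eq_coe_finsetCard, Nat.card_Iic]
    have hcast : ((lengthUnion M k).encard : ℝ≥0∞) ≤ (((B - lam) / d : ℕ) : ℝ≥0∞) + 1 := by
      have h := ENat.toENNReal_le.2 hcard
      rwa [ENat.toENNReal_coe, Nat.cast_add, Nat.cast_one] at h
    refine hcast.trans (add_le_add_left ?_ 1)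
    obtain ⟨μB, hμB1, hμBk, -, hB1, -⟩ := exists_min_bound hk hBmem
    obtain ⟨μl, hμl1, -, hμllam, -, hl2⟩ := exists_min_bound hk hlamem
    have hBle : (B : ℝ≥0∞) ≤ (k : ℝ≥0∞) * ρ :=
      hB1.trans (mul_le_mul_left (by exact_mod_cast hμBk) ρ)
    have hlamge : (k : ℝ≥0∞) * ρ⁻¹ ≤ (lam : ℝ≥0∞) := by
      rcases eq_or_ne ρ ⊤ with h | h
      · simp [h]
      · have hklam : (k : ℝ≥0∞) ≤ (lam : ℝ≥0∞) * ρ :=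
          hl2.trans (mul_le_mul_left (by exact_mod_cast hμllam) ρ)
        calc (k : ℝ≥0∞) * ρ⁻¹ ≤ ((lam : ℝ≥0∞) * ρ) * ρ⁻¹ := mul_le_mul_left hklam _
          _ = lam := by rw [mul_assoc, ENNReal.mul_inv_cancel hρ0 h, mul_one]
    have step1 : (((B - lam) / d : ℕ) : ℝ≥0∞) ≤ ((B - lam : ℕ) : ℝ≥0∞) / (d : ℝ≥0∞) := by
      rw [ENNReal.le_div_iff_mul_le (Or.inl hd0') (Or.inl hdt')]
      exact_mod_cast Nat.div_mul_le_self (B - lam) d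
    have step2 : ((B - lam : ℕ) : ℝ≥0∞) = (B : ℝ≥0∞) - (lam : ℝ≥0∞) := ENNReal.natCast_sub B lam
    have step3 : (B : ℝ≥0∞) - (lam : ℝ≥0∞) ≤ (k : ℝ≥0∞) * ρ - (k : ℝ≥0∞) * ρ⁻¹ :=
      tsub_le_tsub hBle hlamge
    have step4 : (k : ℝ≥0∞) * ρ - (k : ℝ≥0∞) * ρ⁻¹ = (k : ℝ≥0∞) * (ρ - ρ⁻¹) :=
      (ENNReal.mul_sub (fun _ _ => ENNReal.natCast_ne_top k)).symm
    calc (((B - lam) / d : ℕ) : ℝ≥0∞)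
        ≤ ((B : ℝ≥0∞) - (lam : ℝ≥0∞)) / (d : ℝ≥0∞) := by rw [← step2]; exact step1
      _ ≤ ((k : ℝ≥0∞) * (ρ - ρ⁻¹)) / (d : ℝ≥0∞) := by
          rw [← step4]; exact ENNReal.div_le_div_right step3 _
      _ = (k : ℝ≥0∞) * ((1 / (d : ℝ≥0∞)) * (ρ - 1 / ρ)) := by
          rw [one_div, one_div, div_eq_mul_inv, mul_assoc, mul_comm (ρ - ρ⁻¹) ((d : ℝ≥0∞))⁻¹]

end AuxAnalytic


section AuxLower

open Filter Topology

variable {M : Type*} [CancelMonoid M]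

theorem ennreal_div_mul_div (a b : ℝ≥0∞) {c e : ℝ≥0∞} (hc : c ≠ 0) (hc' : c ≠ ⊤) :
    (a / c) * (b / e) = (a * b) / (c * e) := by
  rw [div_eq_mul_inv, div_eq_mul_inv, div_eq_mul_inv,
    ENNReal.mul_inv (Or.inl hc) (Or.inl hc'), mul_mul_mul_comm]

theorem ennreal_div_div (X : ℝ≥0∞) {c e : ℝ≥0∞} (hc : c ≠ 0) (hc' : c ≠ ⊤) :
    X / (c * e) = X / c / e := by
  rw [div_eq_mul_inv, ENNReal.mul_inv (Or.inl hc) (Or.inl hc'), ← mul_assoc,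
    ← div_eq_mul_inv, ← div_eq_mul_inv]

theorem tendsto_nat_sub_div_nat (c : ℕ) :
    Tendsto (fun k : ℕ => ((k : ℝ≥0∞) - (c : ℝ≥0∞)) / (k : ℝ≥0∞)) atTop (𝓝 1) := by
  have h0 : Tendsto (fun k : ℕ => (c : ℝ≥0∞) / (k : ℝ≥0∞)) atTop (𝓝 0) := by
    have := ENNReal.Tendsto.const_mul (a := (c : ℝ≥0∞))
      ENNReal.tendsto_inv_nat_nhds_zero (Or.inr (ENNReal.natCast_ne_top c))
    rw [mul_zero] at this
    simpa [div_eq_mul_inv] using this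
  have h1 : Tendsto (fun k : ℕ => 1 - (c : ℝ≥0∞) / (k : ℝ≥0∞)) atTop (𝓝 (1 - 0)) :=
    ENNReal.Tendsto.sub tendsto_const_nhds h0 (Or.inl ENNReal.one_ne_top)
  rw [tsub_zero] at h1
  refine h1.congr' ?_
  filter_upwards [eventually_ge_atTop (c + 1)] with k hk
  have hk0 : (k : ℝ≥0∞) ≠ 0 := Nat.cast_ne_zero.2 (by omega)
  have hkt : (k : ℝ≥0∞) ≠ ⊤ := ENNReal.natCast_ne_top k
  rw [ENNReal.sub_div (fun _ _ => hk0), ENNReal.div_self hk0 hkt]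

/-- The key lower bound: every pair `(a₀, m')` with `m' ∈ L(a₀)` strictly above the minimum
`m = min L(a₀)` forces `liminf |U_k|/k ≥ (1/d)·(m'/m - m/m')`. -/
theorem liminf_lower (hne : (DeltaH M).Nonempty) {a0 : M} (ha0 : ¬IsUnit a0)
    {m' : ℕ} (hm'mem : m' ∈ lengths a0) (hlt : sInf (lengths a0) < m') :
    (1 / ((sInf (DeltaH M) : ℕ) : ℝ≥0∞)) *
        ((m' : ℝ≥0∞) / ((sInf (lengths a0) : ℕ) : ℝ≥0∞) -
          ((sInf (lengths a0) : ℕ) : ℝ≥0∞) / (m' : ℝ≥0∞)) ≤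
      Filter.liminf (fun k : ℕ => ((lengthUnion M k).encard : ℝ≥0∞) / (k : ℝ≥0∞))
        Filter.atTop := by
  obtain ⟨aw, x, haw, hx1, hd1, hawx, hawxd⟩ := delta_witness hne
  set d := sInf (DeltaH M) with hd_def
  set m := sInf (lengths a0) with hm_def
  have hmmem : m ∈ lengths a0 := Nat.sInf_mem ⟨m', hm'mem⟩
  have hm1 : 1 ≤ m := by
    rcases Nat.eq_zero_or_pos m with h0 | h
    · exact absurd (h0 ▸ hmmem) (zero_not_mem_lengths ha0)
    · exact h
  have hdvd : d ∣ m' - m := lengths_sub_dvd hne ha0 (m' - m) m m' hmmem hm'mem rfl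
  obtain ⟨D, hD⟩ := hdvd
  have hD1 : 1 ≤ D := by
    rcases Nat.eq_zero_or_pos D with h0 | h
    · rw [h0, Nat.mul_zero] at hD; omega
    · exact h
  have hm' : m' = m + D * d := by
    have : m' - m = d * D := hD
    have h2 : d * D = D * d := Nat.mul_comm d D
    omega
  subst hm'
  have hasm : HasLen a0 m := by rwa [lengths_eq_of_not_isUnit ha0] at hmmem
  have hasm' : HasLen a0 (m + D * d) := by rwa [lengths_eq_of_not_isUnit ha0] at hm'mem
  -- the flexible family of lengths
  have fam : ∀ S t : ℕ, t ≤ S * D + D → HasLen (a0 ^ S * aw ^ D) (S * m + D * x + t * d) := by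
    intro S t ht
    obtain ⟨i, j, hiS, hjD, hij⟩ : ∃ i j, i ≤ S ∧ j ≤ D ∧ i * D + j = t := by
      rcases le_or_gt t (S * D) with h | h
      · refine ⟨t / D, t % D, ?_, (Nat.mod_lt _ (by omega)).le, ?_⟩
        · calc t / D ≤ S * D / D := Nat.div_le_div_right h
            _ = S := Nat.mul_div_cancel S (by omega)
        · rw [mul_comm]; exact Nat.div_add_mod t D
      · exact ⟨S, t - S * D, le_rfl, by omega, by omega⟩
    have h1 : HasLen (a0 ^ S) ((S - i) * m + i * (m + D * d)) := hasm.pow_mix hasm' hiS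
    have h2 : HasLen (aw ^ D) ((D - j) * x + j * (x + d)) := hawx.pow_mix hawxd hjD
    have h := h1.mul h2
    have harith : (S - i) * m + i * (m + D * d) + ((D - j) * x + j * (x + d))
        = S * m + D * x + t * d := by
      obtain ⟨S', rfl⟩ : ∃ S', S = i + S' := ⟨S - i, by omega⟩
      obtain ⟨D', rfl⟩ : ∃ D', D = j + D' := ⟨D - j, by omega⟩
      subst hij
      simp only [Nat.add_sub_cancel_left]
      ring
    rwa [harith] at h
  have fam' : ∀ S : ℕ, HasLen (a0 ^ S * aw ^ D) (S * (m + D * d) + D * x) :=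
    fun S => (hasm'.pow S).mul (hawx.pow D)
  -- membership of a long AP in U_{k_N}
  have hmem : ∀ N j : ℕ, j ≤ (2 * m + D * d) * N * D →
      m * m * N + D * x + j * d ∈ lengthUnion M (m * (m + D * d) * N + D * x) := by
    intro N j hj
    rcases le_or_gt j (m * N * D) with h | h
    · refine mem_lengthUnion.2 ⟨a0 ^ (m * N) * aw ^ D, ?_, ?_⟩
      · have h' := fam' (m * N)
        rwa [show m * N * (m + D * d) = m * (m + D * d) * N by ring] at h'
      · have h' := fam (m * N) j (by omega)
        rwa [show m * N * m = m * m * N by ring] at h'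
    · obtain ⟨t, rfl⟩ : ∃ t, j = m * N * D + t := ⟨j - m * N * D, by omega⟩
      refine mem_lengthUnion.2 ⟨a0 ^ ((m + D * d) * N) * aw ^ D, ?_, ?_⟩
      · have h' := fam ((m + D * d) * N) 0 (Nat.zero_le _)
        rwa [show (m + D * d) * N * m + D * x + 0 * d = m * (m + D * d) * N + D * x by ring] at h'
      · have ht : t ≤ (m + D * d) * N * D + D := by
          have e : (2 * m + D * d) * N * D = m * N * D + (m + D * d) * N * D := by ring
          omega
        have h' := fam ((m + D * d) * N) t ht
        rwa [show (m + D * d) * N * m + D * x + t * d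
            = m * m * N + D * x + (m * N * D + t) * d by ring] at h'
  -- cardinality lower bound at the special indices
  have hcard : ∀ N : ℕ, (((2 * m + D * d) * N * D + 1 : ℕ) : ℕ∞)
      ≤ (lengthUnion M (m * (m + D * d) * N + D * x)).encard := by
    intro N
    have hmap : (fun j => m * m * N + D * x + j * d) '' Set.Iic ((2 * m + D * d) * N * D)
        ⊆ lengthUnion M (m * (m + D * d) * N + D * x) := by
      rintro _ ⟨j, hj, rfl⟩
      exact hmem N j hj
    have hinj : Function.Injective (fun j => m * m * N + D * x + j * d) := by
      intro u v huv
      simp only at huv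
      have h2 : u * d = v * d := by omega
      exact Nat.eq_of_mul_eq_mul_right (by omega) h2
    calc (((2 * m + D * d) * N * D + 1 : ℕ) : ℕ∞)
        = (Set.Iic ((2 * m + D * d) * N * D)).encard := by
          rw [← Finset.coe_Iic, Set.encard_coe_eq_coe_finsetCard, Nat.card_Iic]
      _ = ((fun j => m * m * N + D * x + j * d) '' Set.Iic ((2 * m + D * d) * N * D)).encard :=
          (hinj.injOn.encard_image).symm
      _ ≤ _ := Set.encard_mono hmap
  have hmono := lengthUnion_encard_mono (M := M) hne
  set A := (2 * m + D * d) * D with hA_def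
  set P := m * (m + D * d) with hP_def
  set q0 := D * x with hq0_def
  have hP1 : 1 ≤ P := by
    have : 1 * 1 ≤ m * (m + D * d) := Nat.mul_le_mul hm1 (by omega)
    omega
  have hP0' : (P : ℝ≥0∞) ≠ 0 := Nat.cast_ne_zero.2 (by omega)
  have hPt' : (P : ℝ≥0∞) ≠ ⊤ := ENNReal.natCast_ne_top P
  have hcard2 : ∀ N : ℕ, ((A * N + 1 : ℕ) : ℕ∞) ≤ (lengthUnion M (P * N + q0)).encard := by
    intro N
    have h := hcard N
    rwa [show (2 * m + D * d) * N * D = A * N by rw [hA_def]; ring] at h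
  -- eventual pointwise lower bound
  have hev : ∀ k : ℕ, P + q0 + 1 ≤ k →
      ((A : ℝ≥0∞) * ((k : ℝ≥0∞) - ((q0 + P : ℕ) : ℝ≥0∞))) / ((P : ℝ≥0∞) * (k : ℝ≥0∞))
        ≤ ((lengthUnion M k).encard : ℝ≥0∞) / (k : ℝ≥0∞) := by
    intro k hkbig
    set N := (k - q0) / P with hN_def
    have hh1 : P * N ≤ k - q0 := by
      have := Nat.div_mul_le_self (k - q0) P
      calc P * N = (k - q0) / P * P := by rw [hN_def, mul_comm]
        _ ≤ k - q0 := this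
    have hkN : P * N + q0 ≤ k := by omega
    have hNP : k - (q0 + P) ≤ P * N := by
      have hmod := Nat.div_add_mod (k - q0) P
      have hmlt : (k - q0) % P < P := Nat.mod_lt _ (by omega)
      have : P * N = P * ((k - q0) / P) := by rw [hN_def]
      omega
    have hle1 : ((A * N + 1 : ℕ) : ℕ∞) ≤ (lengthUnion M k).encard :=
      (hcard2 N).trans (hmono hkN)
    have hle2 : ((A * N : ℕ) : ℝ≥0∞) ≤ ((lengthUnion M k).encard : ℝ≥0∞) := by
      have h := ENat.toENNReal_le.2 hle1
      rw [ENat.toENNReal_coe] at h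
      exact le_trans (by exact_mod_cast Nat.le_succ (A * N)) h
    refine le_trans ?_ (ENNReal.div_le_div_right hle2 (k : ℝ≥0∞))
    rw [ennreal_div_div _ hP0' hPt']
    refine ENNReal.div_le_div_right ?_ (k : ℝ≥0∞)
    rw [ENNReal.div_le_iff_le_mul (Or.inl hP0') (Or.inl hPt')]
    have hnat : A * (k - (q0 + P)) ≤ A * N * P := by
      calc A * (k - (q0 + P)) ≤ A * (P * N) := Nat.mul_le_mul_left A hNP
        _ = A * N * P := by ring
    calc (A : ℝ≥0∞) * ((k : ℝ≥0∞) - ((q0 + P : ℕ) : ℝ≥0∞))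
        = ((A * (k - (q0 + P)) : ℕ) : ℝ≥0∞) := by push_cast [ENNReal.natCast_sub]; ring
      _ ≤ ((A * N * P : ℕ) : ℝ≥0∞) := by exact_mod_cast hnat
      _ = ((A * N : ℕ) : ℝ≥0∞) * (P : ℝ≥0∞) := by push_cast; ring
  -- the tendsto of the lower envelope
  have htend : Tendsto (fun k : ℕ =>
      ((A : ℝ≥0∞) * ((k : ℝ≥0∞) - ((q0 + P : ℕ) : ℝ≥0∞))) / ((P : ℝ≥0∞) * (k : ℝ≥0∞)))
      atTop (𝓝 ((A : ℝ≥0∞) / (P : ℝ≥0∞))) := by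
    have h1 := ENNReal.Tendsto.const_mul (a := (A : ℝ≥0∞) / (P : ℝ≥0∞))
      (tendsto_nat_sub_div_nat (q0 + P)) (Or.inl one_ne_zero)
    rw [mul_one] at h1
    refine h1.congr fun k => ?_
    exact ennreal_div_mul_div (A : ℝ≥0∞) _ hP0' hPt'
  have hlim1 : (A : ℝ≥0∞) / (P : ℝ≥0∞) ≤
      liminf (fun k : ℕ => ((lengthUnion M k).encard : ℝ≥0∞) / (k : ℝ≥0∞)) atTop := by
    have h2 := liminf_le_liminf (eventually_atTop.2 ⟨P + q0 + 1, hev⟩)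
    rwa [htend.liminf_eq] at h2
  refine le_trans ?_ hlim1
  -- finally `(1/d) * (W/m - m/W) ≤ A/P` where `W = m + D*d`
  have hd0' : (d : ℝ≥0∞) ≠ 0 := Nat.cast_ne_zero.2 (by omega)
  have hdt' : (d : ℝ≥0∞) ≠ ⊤ := ENNReal.natCast_ne_top d
  have hm0' : (m : ℝ≥0∞) ≠ 0 := Nat.cast_ne_zero.2 (by omega)
  have hmt' : (m : ℝ≥0∞) ≠ ⊤ := ENNReal.natCast_ne_top m
  have hW0' : ((m + D * d : ℕ) : ℝ≥0∞) ≠ 0 := Nat.cast_ne_zero.2 (by omega)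
  have hWt' : ((m + D * d : ℕ) : ℝ≥0∞) ≠ ⊤ := ENNReal.natCast_ne_top _
  have hWW : m * m ≤ (m + D * d) * (m + D * d) := Nat.mul_le_mul (by omega) (by omega)
  have hsq : (m + D * d) * (m + D * d) - m * m = A * d := by
    have h : (m + D * d) * (m + D * d) = m * m + (2 * m + D * d) * D * d := by ring
    have h2 : A * d = (2 * m + D * d) * D * d := by rw [hA_def]
    omega
  have h1 : ((m + D * d : ℕ) : ℝ≥0∞) / (m : ℝ≥0∞) - (m : ℝ≥0∞) / ((m + D * d : ℕ) : ℝ≥0∞)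
      ≤ (((m + D * d) * (m + D * d) - m * m : ℕ) : ℝ≥0∞) / ((m * (m + D * d) : ℕ) : ℝ≥0∞) := by
    rw [tsub_le_iff_right]
    have eA : ((m + D * d : ℕ) : ℝ≥0∞) / (m : ℝ≥0∞)
        = (((m + D * d) * (m + D * d) : ℕ) : ℝ≥0∞) / ((m * (m + D * d) : ℕ) : ℝ≥0∞) := by
      rw [Nat.cast_mul, Nat.cast_mul, mul_comm (m : ℝ≥0∞) (((m + D * d : ℕ) : ℝ≥0∞)),
        ENNReal.mul_div_mul_left _ _ hW0' hWt']
    have eB : (m : ℝ≥0∞) / ((m + D * d : ℕ) : ℝ≥0∞)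
        = ((m * m : ℕ) : ℝ≥0∞) / ((m * (m + D * d) : ℕ) : ℝ≥0∞) := by
      rw [Nat.cast_mul, Nat.cast_mul, ENNReal.mul_div_mul_left _ _ hm0' hmt']
    rw [eA, eB, ENNReal.div_add_div_same]
    refine ENNReal.div_le_div_right ?_ _
    exact_mod_cast Nat.le_of_eq (by omega)
  calc (1 / (d : ℝ≥0∞)) *
      (((m + D * d : ℕ) : ℝ≥0∞) / (m : ℝ≥0∞) - (m : ℝ≥0∞) / ((m + D * d : ℕ) : ℝ≥0∞))
      ≤ (1 / (d : ℝ≥0∞)) * (((A * d : ℕ) : ℝ≥0∞) / ((m * (m + D * d) : ℕ) : ℝ≥0∞)) := by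
        refine mul_le_mul_right (h1.trans_eq ?_) _
        rw [hsq]
    _ = (A : ℝ≥0∞) / (P : ℝ≥0∞) := by
        rw [one_div, Nat.cast_mul, hP_def, div_eq_mul_inv ((A : ℝ≥0∞) * (d : ℝ≥0∞)) _]
        rw [show (d : ℝ≥0∞)⁻¹ * ((A : ℝ≥0∞) * (d : ℝ≥0∞) * ((m * (m + D * d) : ℕ) : ℝ≥0∞)⁻¹)
            = ((d : ℝ≥0∞)⁻¹ * (d : ℝ≥0∞)) * ((A : ℝ≥0∞) * ((m * (m + D * d) : ℕ) : ℝ≥0∞)⁻¹)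
          by ring]
        rw [ENNReal.inv_mul_cancel hd0' hdt', one_mul, ← div_eq_mul_inv]

end AuxLower


theorem stmt9 {M : Type*} [CancelMonoid M] (hA : Atomic M)
    (hfin : (DeltaH M).Finite) (hne : (DeltaH M).Nonempty)
    (hhyp : (∃ k : ℕ, 1 ≤ k ∧ rhoK M k = ⊤) ∨
      ∃ Mb : ℕ, ∀ k : ℕ, 2 ≤ k → rhoK M k ≤ rhoK M (k - 1) + (Mb : ℝ≥0∞)) :
    Filter.Tendsto (fun k : ℕ => ((lengthUnion M k).encard : ℝ≥0∞) / (k : ℝ≥0∞))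
      Filter.atTop
      (nhds ((1 / ((sInf (DeltaH M) : ℕ) : ℝ≥0∞)) * (elasticity M - 1 / elasticity M))) := by
  obtain ⟨aw, x, haw, hx1, hd1, hawx, hawxd⟩ := delta_witness hne
  have hρ1 : (1 : ℝ≥0∞) ≤ elasticity M := one_le_elasticity
  have hρ0 : elasticity M ≠ 0 := (zero_lt_one.trans_le hρ1).ne'
  have hd0' : ((sInf (DeltaH M) : ℕ) : ℝ≥0∞) ≠ 0 := Nat.cast_ne_zero.2 (by omega)
  have hdt' : ((sInf (DeltaH M) : ℕ) : ℝ≥0∞) ≠ ⊤ := ENNReal.natCast_ne_top _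
  set ρ := elasticity M with hρ_def
  set d := sInf (DeltaH M) with hd_def
  set T := (1 / (d : ℝ≥0∞)) * (ρ - 1 / ρ) with hT_def
  -- the upper bound on the limsup
  have hlimsup : Filter.limsup
      (fun k : ℕ => ((lengthUnion M k).encard : ℝ≥0∞) / (k : ℝ≥0∞)) Filter.atTop ≤ T := by
    have hev : ∀ᶠ k : ℕ in Filter.atTop,
        ((lengthUnion M k).encard : ℝ≥0∞) / (k : ℝ≥0∞) ≤ T + 1 / (k : ℝ≥0∞) := by
      filter_upwards [Filter.eventually_ge_atTop 1] with k hk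
      have hk0 : (k : ℝ≥0∞) ≠ 0 := Nat.cast_ne_zero.2 (by omega)
      have hkt : (k : ℝ≥0∞) ≠ ⊤ := ENNReal.natCast_ne_top k
      calc ((lengthUnion M k).encard : ℝ≥0∞) / (k : ℝ≥0∞)
          ≤ ((k : ℝ≥0∞) * T + 1) / (k : ℝ≥0∞) :=
            ENNReal.div_le_div_right (encard_upper hne hk) _
        _ = (k : ℝ≥0∞) * T / (k : ℝ≥0∞) + 1 / (k : ℝ≥0∞) := ENNReal.div_add_div_same.symm
        _ = T + 1 / (k : ℝ≥0∞) := by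
            rw [mul_comm, mul_div_assoc, ENNReal.div_self hk0 hkt, mul_one]
    have htt : Filter.Tendsto (fun k : ℕ => T + 1 / (k : ℝ≥0∞)) Filter.atTop (nhds (T + 0)) := by
      refine Filter.Tendsto.const_add T ?_
      simpa only [one_div] using ENNReal.tendsto_inv_nat_nhds_zero
    rw [add_zero] at htt
    calc Filter.limsup (fun k : ℕ => ((lengthUnion M k).encard : ℝ≥0∞) / (k : ℝ≥0∞))
          Filter.atTop
        ≤ Filter.limsup (fun k : ℕ => T + 1 / (k : ℝ≥0∞)) Filter.atTop :=
          Filter.limsup_le_limsup hev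
      _ = T := htt.limsup_eq
  -- the lower bound on the liminf
  have hliminf : T ≤ Filter.liminf
      (fun k : ℕ => ((lengthUnion M k).encard : ℝ≥0∞) / (k : ℝ≥0∞)) Filter.atTop := by
    set L := Filter.liminf (fun k : ℕ => ((lengthUnion M k).encard : ℝ≥0∞) / (k : ℝ≥0∞))
      Filter.atTop with hL_def
    have pair_bound : ∀ a0 : M, ¬IsUnit a0 → ∀ m' : ℕ, m' ∈ lengths a0 →
        sInf (lengths a0) < m' →
        (m' : ℝ≥0∞) / ((sInf (lengths a0) : ℕ) : ℝ≥0∞) -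
          ((sInf (lengths a0) : ℕ) : ℝ≥0∞) / (m' : ℝ≥0∞) ≤ (d : ℝ≥0∞) * L := by
      intro a0 h0 m' h1 h2
      have h3 := liminf_lower hne h0 h1 h2
      calc (m' : ℝ≥0∞) / ((sInf (lengths a0) : ℕ) : ℝ≥0∞) -
            ((sInf (lengths a0) : ℕ) : ℝ≥0∞) / (m' : ℝ≥0∞)
          = (d : ℝ≥0∞) * ((1 / (d : ℝ≥0∞)) *
              ((m' : ℝ≥0∞) / ((sInf (lengths a0) : ℕ) : ℝ≥0∞) -
                ((sInf (lengths a0) : ℕ) : ℝ≥0∞) / (m' : ℝ≥0∞))) := by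
            rw [one_div, ← mul_assoc, ENNReal.mul_inv_cancel hd0' hdt', one_mul]
        _ ≤ (d : ℝ≥0∞) * L := mul_le_mul_right h3 _
    -- approximating pairs for the elasticity
    have approx : ∀ b : ℝ≥0∞, b < ρ → ∃ (a0 : M) (m' : ℕ), ¬IsUnit a0 ∧ m' ∈ lengths a0 ∧
        b < (m' : ℝ≥0∞) / ((sInf (lengths a0) : ℕ) : ℝ≥0∞) := by
      intro b hb
      rw [hρ_def, elasticity, lt_iSup_iff] at hb
      obtain ⟨a, ha⟩ := hb
      by_cases hu : IsUnit a
      · have h1 : setElasticity (lengths a) = 1 := by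
          rw [lengths, if_pos hu, setElasticity, if_pos rfl]
        rw [h1] at ha
        have hxmem : x ∈ lengths aw := by rw [lengths_eq_of_not_isUnit haw]; exact hawx
        have hμmem : sInf (lengths aw) ∈ lengths aw := Nat.sInf_mem ⟨x, hxmem⟩
        have hμ1 : 1 ≤ sInf (lengths aw) := by
          rcases Nat.eq_zero_or_pos (sInf (lengths aw)) with h0 | h
          · exact absurd (h0 ▸ hμmem) (zero_not_mem_lengths haw)
          · exact h
        refine ⟨aw, sInf (lengths aw), haw, hμmem, ?_⟩
        rw [ENNReal.div_self (Nat.cast_ne_zero.2 (by omega)) (ENNReal.natCast_ne_top _)]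
        exact ha
      · rcases Set.eq_empty_or_nonempty (lengths a) with hLe | hLne
        · exfalso
          rw [setElasticity_nonunit hu, hLe] at ha
          simp at ha
        · have hμmem : sInf (lengths a) ∈ lengths a := Nat.sInf_mem hLne
          have hμ1 : 1 ≤ sInf (lengths a) := by
            rcases Nat.eq_zero_or_pos (sInf (lengths a)) with h0 | h
            · exact absurd (h0 ▸ hμmem) (zero_not_mem_lengths hu)
            · exact h
          have hμ0 : ((sInf (lengths a) : ℕ) : ℝ≥0∞) ≠ 0 := Nat.cast_ne_zero.2 (by omega)
          have hμt : ((sInf (lengths a) : ℕ) : ℝ≥0∞) ≠ ⊤ := ENNReal.natCast_ne_top _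
          by_contra hcon
          push_neg at hcon
          have hallb : ∀ n ∈ lengths a, (n : ℝ≥0∞) / ((sInf (lengths a) : ℕ) : ℝ≥0∞) ≤ b :=
            fun n hn => hcon a n hu hn
          have hSb : setElasticity (lengths a) ≤ b := by
            rw [setElasticity_nonunit hu, ENNReal.div_le_iff hμ0 hμt]
            refine iSup₂_le fun n hn => ?_
            rw [← ENNReal.div_le_iff hμ0 hμt]
            exact hallb n hn
          exact absurd ha hSb.not_gt
    -- main density argument
    have key : ∀ y : ℝ≥0∞, y < ρ - ρ⁻¹ → y ≤ (d : ℝ≥0∞) * L := by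
      intro y hy
      have hyt : y ≠ ⊤ := hy.ne_top
      obtain ⟨b, hb1, hbρ, hyb⟩ : ∃ b : ℝ≥0∞, 1 ≤ b ∧ b < ρ ∧ y ≤ b - b⁻¹ := by
        rcases eq_or_ne ρ ⊤ with hρt | hρt
        · refine ⟨y + 2, (by norm_num : (1:ℝ≥0∞) ≤ 2).trans le_add_self, ?_, ?_⟩
          · rw [hρt]
            exact lt_top_iff_ne_top.2 (ENNReal.add_ne_top.2 ⟨hyt, ENNReal.ofNat_ne_top⟩)
          · have hinv1 : (y + 2)⁻¹ ≤ 1 :=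
              ENNReal.inv_le_one.2 ((by norm_num : (1:ℝ≥0∞) ≤ 2).trans le_add_self)
            have h2 : y + 1 ≤ (y + 2) - 1 := by
              rw [show (2 : ℝ≥0∞) = 1 + 1 by norm_num, ← add_assoc,
                ENNReal.add_sub_cancel_right ENNReal.one_ne_top]
            exact le_self_add.trans (h2.trans (tsub_le_tsub_left hinv1 _))
        · have hρgt1 : 1 < ρ := by
            rcases eq_or_lt_of_le hρ1 with h | h
            · exfalso
              rw [← h] at hy
              simp at hy
            · exact h
          obtain ⟨ε, hε0, hεlt⟩ := ENNReal.lt_iff_exists_add_pos_lt.1 hy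
          set ε' : ℝ≥0∞ := min ((ε : ℝ≥0∞) / 2) (ρ - 1) with hε'_def
          have hεne : (ε : ℝ≥0∞) ≠ 0 := by exact_mod_cast hε0.ne'
          have hε'0 : ε' ≠ 0 := by
            have ha : (0 : ℝ≥0∞) < (ε : ℝ≥0∞) / 2 := ENNReal.div_pos hεne ENNReal.ofNat_ne_top
            have hbb : (0 : ℝ≥0∞) < ρ - 1 := tsub_pos_of_lt hρgt1
            exact (lt_min ha hbb).ne'
          have hε'ρ1 : ε' ≤ ρ - 1 := min_le_right _ _
          have hε'ε2 : 2 * ε' ≤ (ε : ℝ≥0∞) := by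
            calc 2 * ε' ≤ 2 * ((ε : ℝ≥0∞) / 2) := mul_le_mul_right (min_le_left _ _) 2
              _ = ε := ENNReal.mul_div_cancel (by norm_num) (by norm_num)
          have hb1' : 1 ≤ ρ - ε' := by
            have h := tsub_le_tsub_left hε'ρ1 ρ
            rwa [ENNReal.sub_sub_cancel hρt hρ1] at h
          have hbne0 : ρ - ε' ≠ 0 := by
            intro h
            rw [h] at hb1'
            simp at hb1'
          have hbnet : ρ - ε' ≠ ⊤ := (tsub_le_self.trans_lt hρt.lt_top).ne
          have hε'ρ : ε' ≤ ρ := hε'ρ1.trans tsub_le_self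
          refine ⟨ρ - ε', hb1', ENNReal.sub_lt_self hρt hρ0 hε'0, ?_⟩
          have hinv : (ρ - ε')⁻¹ ≤ ρ⁻¹ + ε' := by
            have h1 : (1 : ℝ≥0∞) ≤ (ρ⁻¹ + ε') * (ρ - ε') := by
              calc (1 : ℝ≥0∞) = ρ⁻¹ * ρ := (ENNReal.inv_mul_cancel hρ0 hρt).symm
                _ = ρ⁻¹ * ((ρ - ε') + ε') := by rw [tsub_add_cancel_of_le hε'ρ]
                _ = ρ⁻¹ * (ρ - ε') + ρ⁻¹ * ε' := by rw [mul_add]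
                _ ≤ ρ⁻¹ * (ρ - ε') + ε' * (ρ - ε') := by
                    refine add_le_add le_rfl ?_
                    rw [mul_comm]
                    exact mul_le_mul_right ((ENNReal.inv_le_one.2 hρ1).trans hb1') ε'
                _ = (ρ⁻¹ + ε') * (ρ - ε') := (add_mul _ _ _).symm
            calc (ρ - ε')⁻¹ = 1 * (ρ - ε')⁻¹ := (one_mul _).symm
              _ ≤ ((ρ⁻¹ + ε') * (ρ - ε')) * (ρ - ε')⁻¹ := mul_le_mul_left h1 _
              _ = ρ⁻¹ + ε' := by rw [mul_assoc, ENNReal.mul_inv_cancel hbne0 hbnet, mul_one]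
          calc y ≤ (y + ε) - 2 * ε' :=
              (ENNReal.cancel_of_ne (hε'ε2.trans_lt ENNReal.coe_lt_top).ne).le_tsub_of_add_le_right
                (add_le_add le_rfl hε'ε2)
            _ ≤ (ρ - ρ⁻¹) - 2 * ε' := tsub_le_tsub_right hεlt.le _
            _ = ρ - (ρ⁻¹ + 2 * ε') := by rw [tsub_tsub]
            _ = (ρ - ε') - (ρ⁻¹ + ε') := by
                rw [tsub_tsub]
                congr 1
                ring
            _ ≤ (ρ - ε') - (ρ - ε')⁻¹ := tsub_le_tsub_left hinv _
      obtain ⟨a0, m', h0, hm'mem, hbpair⟩ := approx b hbρ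
      have hμmem : sInf (lengths a0) ∈ lengths a0 := Nat.sInf_mem ⟨m', hm'mem⟩
      have hμ1 : 1 ≤ sInf (lengths a0) := by
        rcases Nat.eq_zero_or_pos (sInf (lengths a0)) with hh | hh
        · exact absurd (hh ▸ hμmem) (zero_not_mem_lengths h0)
        · exact hh
      have hμ0 : ((sInf (lengths a0) : ℕ) : ℝ≥0∞) ≠ 0 := Nat.cast_ne_zero.2 (by omega)
      have hμt : ((sInf (lengths a0) : ℕ) : ℝ≥0∞) ≠ ⊤ := ENNReal.natCast_ne_top _
      have hμm' : sInf (lengths a0) < m' := by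
        by_contra hcon
        push_neg at hcon
        have hle : (m' : ℝ≥0∞) / ((sInf (lengths a0) : ℕ) : ℝ≥0∞) ≤ 1 := by
          rw [ENNReal.div_le_iff hμ0 hμt, one_mul]
          exact_mod_cast hcon
        exact absurd (hb1.trans_lt hbpair) hle.not_gt
      have hm'0 : (m' : ℝ≥0∞) ≠ 0 := Nat.cast_ne_zero.2 (by omega)
      have hm't : (m' : ℝ≥0∞) ≠ ⊤ := ENNReal.natCast_ne_top _
      have hinvt : ((m' : ℝ≥0∞) / ((sInf (lengths a0) : ℕ) : ℝ≥0∞))⁻¹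
          = ((sInf (lengths a0) : ℕ) : ℝ≥0∞) / (m' : ℝ≥0∞) :=
        ENNReal.inv_div (Or.inl hμt) (Or.inl hμ0)
      calc y ≤ b - b⁻¹ := hyb
        _ ≤ (m' : ℝ≥0∞) / ((sInf (lengths a0) : ℕ) : ℝ≥0∞) -
            ((m' : ℝ≥0∞) / ((sInf (lengths a0) : ℕ) : ℝ≥0∞))⁻¹ :=
          tsub_le_tsub hbpair.le (ENNReal.inv_le_inv' hbpair.le)
        _ = (m' : ℝ≥0∞) / ((sInf (lengths a0) : ℕ) : ℝ≥0∞) -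
            ((sInf (lengths a0) : ℕ) : ℝ≥0∞) / (m' : ℝ≥0∞) := by rw [hinvt]
        _ ≤ (d : ℝ≥0∞) * L := pair_bound a0 h0 m' hm'mem hμm'
    have h2 : ρ - ρ⁻¹ ≤ (d : ℝ≥0∞) * L := le_of_forall_lt_imp_le_of_dense key
    rw [hT_def, one_div]
    calc (d : ℝ≥0∞)⁻¹ * (ρ - 1 / ρ) ≤ (d : ℝ≥0∞)⁻¹ * ((d : ℝ≥0∞) * L) := by
          refine mul_le_mul_right ?_ _
          rw [one_div]
          exact h2
      _ = L := by rw [← mul_assoc, ENNReal.inv_mul_cancel hd0' hdt', one_mul]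
  exact tendsto_of_le_liminf_of_limsup_le hliminf hlimsup
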